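/- arXiv:1102.3882 — 5 statements merged into one kernel-verified Lean document; each statement's English description precedes it below -/
import Mathlib

section
/- Let f : (𝔽₂)⁴ → (𝔽₂)⁴ be a function with f(0)=0 such that (i) f is 4-differentially uniform, and (ii) f is strongly 2-anti-invariant. Then f is weakly APN. -/
/-- The vector space `(𝔽₂)⁴`. -/
abbrev V4 := Fin 4 → ZMod 2

/-- The derivative `f̂_u : x ↦ f(x+u) + f(x)`. -/
def deriv4 (f : V4 → V4) (u x : V4) : V4 := f (x + u) + f x

/-- The 𝔽₂-dot product on `(𝔽₂)⁴`. -/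
def dot4 (v w : V4) : ZMod 2 := ∑ i, v i * w i

/-- `f` is weakly APN: for every `u ≠ 0`, `|Im f̂_u| > 4 = 2^{4-2}`. -/
def WeaklyAPN4 (f : V4 → V4) : Prop :=
  ∀ u : V4, u ≠ 0 → 4 < (Set.range (deriv4 f u)).ncard

/-- `f` is 4-differentially uniform. -/
def DiffUnif4 (f : V4 → V4) : Prop :=
  ∀ u : V4, u ≠ 0 → ∀ v : V4, {x : V4 | deriv4 f u x = v}.ncard ≤ 4

/-- The coefficient of the monomial `∏_{i ∈ S} xᵢ` in the algebraic normal form of `g`. -/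
def anfCoeff (g : V4 → ZMod 2) (S : Finset (Fin 4)) : ZMod 2 :=
  ∑ x ∈ Finset.univ.filter (fun x : V4 => ∀ i, x i = 1 → i ∈ S), g x

/-- The algebraic degree of `g` is at most `d`. -/
def DegLE (g : V4 → ZMod 2) (d : ℕ) : Prop :=
  ∀ S : Finset (Fin 4), d < S.card → anfCoeff g S = 0

/-- The algebraic degree of `g` equals `d`. -/
def DegEq (g : V4 → ZMod 2) (d : ℕ) : Prop := DegLE g d ∧ ¬ DegLE g (d - 1)

/-- The component function `⟨f, v⟩ : x ↦ ⟨f(x), v⟩`. -/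
def comp4 (f : V4 → V4) (v : V4) (x : V4) : ZMod 2 := dot4 (f x) v

/-- `n₃(f)`: the number of nonzero `v` with `deg⟨f,v⟩ = 3`. -/
noncomputable def n3 (f : V4 → V4) : ℕ := {v : V4 | v ≠ 0 ∧ DegEq (comp4 f v) 3}.ncard

/-- The Walsh coefficient `W_f(a,b) = Σ_x (-1)^{⟨f(x),b⟩ + ⟨x,a⟩}`. -/
def walsh (f : V4 → V4) (a b : V4) : ℤ :=
  ∑ x : V4, (-1 : ℤ) ^ (dot4 (f x) b + dot4 x a).val

/-- `Lin(f) = n`: `n` is the maximum of `|W_f(a,b)|` over all `a` and nonzero `b`. -/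
def LinEq (f : V4 → V4) (n : ℤ) : Prop :=
  IsGreatest {t : ℤ | ∃ a b : V4, b ≠ 0 ∧ t = |walsh f a b|} n

/-- `a` has Hamming weight 1. -/
def Wt1 (a : V4) : Prop := {i : Fin 4 | a i ≠ 0}.ncard = 1

/-- `Lin₁(f) = n`: max of `|W_f(a,b)|` over `a, b` of Hamming weight 1. -/
def Lin1Eq (f : V4 → V4) (n : ℤ) : Prop :=
  IsGreatest {t : ℤ | ∃ a b : V4, Wt1 a ∧ Wt1 b ∧ t = |walsh f a b|} n

/-- `Diff₁(f) = n`: max of `|{x : f̂_a(x) = b}|` over `a, b` of Hamming weight 1. -/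
def Diff1Eq (f : V4 → V4) (n : ℕ) : Prop :=
  IsGreatest {t : ℕ | ∃ a b : V4, Wt1 a ∧ Wt1 b ∧ t = {x : V4 | deriv4 f a x = b}.ncard} n

/-- `f` is strongly 2-anti-invariant. -/
def StronglyAntiInv2 (f : V4 → V4) : Prop :=
  ∀ V W : Submodule (ZMod 2) V4, f '' (V : Set V4) = (W : Set V4) →
    (Module.finrank (ZMod 2) V = Module.finrank (ZMod 2) W ∧ Module.finrank (ZMod 2) W < 2)
    ∨ (V = ⊤ ∧ W = ⊤)

/-- Identify `k : ℕ` with a vector of `(𝔽₂)⁴` via binary digits. -/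
def toVec (k : ℕ) : V4 := fun i => (((k / 2 ^ (i : ℕ)) % 2 : ℕ) : ZMod 2)

/-- Identify a vector of `(𝔽₂)⁴` with a natural number via binary digits. -/
def toNat4 (x : V4) : ℕ := ∑ i, (x i).val * 2 ^ (i : ℕ)

/-- The function on `(𝔽₂)⁴` given by a value table of integers. -/
def tableFun (L : List ℕ) (x : V4) : V4 := toVec (L.getD (toNat4 x) 0)

lemma addself (x : V4) : x + x = 0 := by ext i; exact CharTwo.add_self_eq_zero _

lemma zmod2_cases (a : ZMod 2) : a = 0 ∨ a = 1 := by revert a; decide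

lemma span_pair_set (a b : V4) :
    ((Submodule.span (ZMod 2) {a, b} : Submodule (ZMod 2) V4) : Set V4)
      = {0, a, b, a + b} := by
  ext z
  constructor
  · intro hz
    rw [SetLike.mem_coe, Submodule.mem_span_pair] at hz
    obtain ⟨c, d, hcd⟩ := hz
    rcases zmod2_cases c with hc | hc <;> rcases zmod2_cases d with hd | hd <;>
      subst hc hd <;> simp only [zero_smul, one_smul, zero_add, add_zero] at hcd <;>
      subst hcd <;> simp [Set.mem_insert_iff]
  · intro hz
    simp only [Set.mem_insert_iff, Set.mem_singleton_iff] at hz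
    have ha : a ∈ Submodule.span (ZMod 2) ({a, b} : Set V4) :=
      Submodule.subset_span (by simp)
    have hb : b ∈ Submodule.span (ZMod 2) ({a, b} : Set V4) :=
      Submodule.subset_span (by simp)
    rcases hz with h | h | h | h <;> subst h
    · exact Submodule.zero_mem _
    · exact ha
    · exact hb
    · exact Submodule.add_mem _ ha hb

/-- Proposition 1 (invariant): if `f : (𝔽₂)⁴ → (𝔽₂)⁴` with `f 0 = 0` is
4-differentially uniform and strongly 2-anti-invariant, then `f` is weakly APN. -/
theorem weaklyAPN_of_diffUnif_of_stronglyAntiInv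
    (f : V4 → V4) (hf0 : f 0 = 0)
    (h1 : DiffUnif4 f) (h2 : StronglyAntiInv2 f) :
    WeaklyAPN4 f := by
  intro u hu
  by_contra hle
  push_neg at hle
  set g := deriv4 f u with hg
  classical
  -- translate to finsets
  have hrange : (Set.range g).ncard = (Finset.univ.image g).card := by
    rw [← Set.ncard_coe_finset, Finset.coe_image, Finset.coe_univ, Set.image_univ]
  have hfiber : ∀ v : V4, (Finset.univ.filter (fun x => g x = v)).card ≤ 4 := by
    intro v
    have := h1 u hu v
    rwa [Set.ncard_eq_toFinset_card', Set.toFinset_setOf] at this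
  set t := Finset.univ.image g with ht
  have htcard : t.card ≤ 4 := by rw [← hrange]; exact hle
  have hsum : (Finset.univ : Finset V4).card
      = ∑ v ∈ t, (Finset.univ.filter (fun x => g x = v)).card :=
    Finset.card_eq_sum_card_image g Finset.univ
  have huniv : (Finset.univ : Finset V4).card = 16 := by
    simp [Fintype.card_fun]
  -- the fiber of g at f u
  set v₀ := f u with hv0
  have hg0 : g 0 = v₀ := by simp [hg, deriv4, hf0, hv0]
  have hgu : g u = v₀ := by simp [hg, deriv4, addself u, hf0, hv0]
  have hv0t : v₀ ∈ t := by
    rw [ht]; exact Finset.mem_image.2 ⟨0, Finset.mem_univ _, hg0⟩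
  set F := Finset.univ.filter (fun x => g x = v₀) with hF
  have hFsum : ∑ v ∈ t, (Finset.univ.filter (fun x => g x = v)).card
      = F.card + ∑ v ∈ t.erase v₀, (Finset.univ.filter (fun x => g x = v)).card := by
    rw [← Finset.add_sum_erase _ _ hv0t]
  have herase : ∑ v ∈ t.erase v₀, (Finset.univ.filter (fun x => g x = v)).card
      ≤ 4 * 3 := by
    calc ∑ v ∈ t.erase v₀, (Finset.univ.filter (fun x => g x = v)).card
        ≤ ∑ _v ∈ t.erase v₀, 4 := Finset.sum_le_sum (fun v _ => hfiber v)
      _ = (t.erase v₀).card * 4 := by rw [Finset.sum_const, smul_eq_mul]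
      _ ≤ 3 * 4 := by
          have : (t.erase v₀).card ≤ 3 := by
            have := Finset.card_erase_of_mem hv0t
            omega
          exact Nat.mul_le_mul_right 4 this
      _ = 4 * 3 := by ring
  have hF4 : F.card = 4 := by
    have h1' : F.card ≤ 4 := hfiber v₀
    have h16 : F.card + ∑ v ∈ t.erase v₀, (Finset.univ.filter (fun x => g x = v)).card
        = 16 := by rw [← hFsum, ← hsum]; exact huniv
    omega
  -- F contains 0 and u, find a third element y
  have h0F : (0 : V4) ∈ F := by simp [hF, hg0]
  have huF : u ∈ F := by simp [hF, hgu]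
  have hnotsub : ¬ F ⊆ ({0, u} : Finset V4) := by
    intro hsub
    have := Finset.card_le_card hsub
    have h2' : ({0, u} : Finset V4).card ≤ 2 := Finset.card_insert_le _ _ |>.trans (by simp)
    omega
  obtain ⟨y, hyF, hy⟩ := Finset.not_subset.1 hnotsub
  have hy0 : y ≠ 0 := by intro h; apply hy; simp [h]
  have hyu : y ≠ u := by intro h; apply hy; simp [h]
  have hgy : g y = v₀ := by simpa [hF] using hyF
  have hfyu : f (y + u) = f u + f y := by
    have : f (y + u) + f y = f u := hgy
    calc f (y + u) = f (y + u) + (f y + f y) := by rw [addself]; abel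
      _ = (f (y + u) + f y) + f y := by abel
      _ = f u + f y := by rw [this]
  -- the subspaces
  set V := Submodule.span (ZMod 2) ({u, y} : Set V4) with hV
  set W := Submodule.span (ZMod 2) ({f u, f y} : Set V4) with hW
  have hVset : (V : Set V4) = {0, u, y, u + y} := span_pair_set u y
  have hWset : (W : Set V4) = {0, f u, f y, f u + f y} := span_pair_set (f u) (f y)
  have himg : f '' (V : Set V4) = (W : Set V4) := by
    rw [hVset, hWset]
    have : u + y = y + u := by abel
    rw [Set.image_insert_eq, Set.image_insert_eq, Set.image_insert_eq,
      Set.image_singleton, hf0, this, hfyu]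
  -- linear independence of u, y
  have hind : LinearIndependent (ZMod 2) ![u, y] := by
    rw [LinearIndependent.pair_iff]
    intro s t hst
    rcases zmod2_cases s with hs | hs <;> rcases zmod2_cases t with htt | htt <;>
      subst hs htt <;> simp only [zero_smul, one_smul, zero_add, add_zero] at hst ⊢
    · simp
    · exact (hy0 hst).elim
    · exact (hu hst).elim
    · exfalso; apply hyu
      have : y = u + (u + y) := by rw [← add_assoc, addself]; abel
      rw [this, hst, add_zero]
  have hVrank : Module.finrank (ZMod 2) V = 2 := by
    have : ({u, y} : Set V4) = Set.range ![u, y] := by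
      simp [Matrix.range_cons, Matrix.range_empty, Set.pair_comm]
    rw [hV, this, finrank_span_eq_card hind]
    simp
  rcases h2 V W himg with ⟨heq, hlt⟩ | ⟨hVtop, _⟩
  · omega
  · have : ((⊤ : Submodule (ZMod 2) V4) : Set V4) = {0, u, y, u + y} := by
      rw [← hVtop]; exact hVset
    have hcard : (Set.univ : Set V4).ncard ≤ 4 := by
      rw [← Submodule.top_coe (R := ZMod 2) (M := V4)] at *
      rw [this]
      calc ({0, u, y, u + y} : Set V4).ncard
          ≤ ({u, y, u + y} : Set V4).ncard + 1 := Set.ncard_insert_le _ _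
        _ ≤ (({y, u + y} : Set V4).ncard + 1) + 1 := by
            exact Nat.add_le_add_right (Set.ncard_insert_le _ _) 1
        _ ≤ ((({u + y} : Set V4).ncard + 1) + 1) + 1 := by
            exact Nat.add_le_add_right (Nat.add_le_add_right (Set.ncard_insert_le _ _) 1) 1
        _ = 4 := by rw [Set.ncard_singleton]
    rw [Set.ncard_univ, Nat.card_eq_fintype_card] at hcard
    simp [Fintype.card_fun] at hcard
end

section
/- Let f : (𝔽₂)⁴ → (𝔽₂)⁴ be a function with f(0)=0 such that for every u ≠ 0 and every v ≠ 0 the Boolean function x ↦ ⟨f̂_u(x), v⟩ is not constant (i.e. n̂(f) = 0). Then f is weakly APN. -/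

lemma dot4_add_left (x y v : V4) : dot4 (x + y) v = dot4 x v + dot4 y v := by
  simp [dot4, add_mul, Finset.sum_add_distrib]

lemma dot4_add_right (x v w : V4) : dot4 x (v + w) = dot4 x v + dot4 x w := by
  simp [dot4, mul_add, Finset.sum_add_distrib]

lemma zmod2_add_self (a : ZMod 2) : a + a = 0 := by revert a; decide

lemma zmod2_eq_of_add_eq_zero {a b : ZMod 2} (h : a + b = 0) : a = b := by
  revert h; revert a b; decide

/-- Proposition 2 (derivative): if `f : (𝔽₂)⁴ → (𝔽₂)⁴` with `f 0 = 0` is such that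
no nonzero component of any derivative `f̂_u` (`u ≠ 0`) is constant (i.e. `n̂(f) = 0`),
then `f` is weakly APN. -/
theorem weaklyAPN_of_no_constant_derivative_component
    (f : V4 → V4) (hf0 : f 0 = 0)
    (h : ∀ u : V4, u ≠ 0 → ∀ v : V4, v ≠ 0 →
      ¬ ∃ c : ZMod 2, ∀ x : V4, dot4 (deriv4 f u x) v = c) :
    WeaklyAPN4 f := by
  intro u hu
  by_contra hcard
  push_neg at hcard
  set S : Set V4 := Set.range (deriv4 f u) with hS
  set s₀ : V4 := deriv4 f u 0 with hs₀
  have hs₀S : s₀ ∈ S := ⟨0, rfl⟩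
  set T : Set V4 := S \ {s₀} with hT
  have hTfin : T.Finite := Set.toFinite _
  have hTcard : T.ncard ≤ 3 := by
    have h1 : T.ncard + 1 = S.ncard := by
      rw [hT]; exact Set.ncard_diff_singleton_add_one hs₀S (Set.toFinite S)
    omega
  haveI : Fintype ↥T := hTfin.fintype
  have hcardT : Fintype.card ↥T ≤ 3 := by
    rw [← Nat.card_eq_fintype_card, Nat.card_coe_set_eq]; exact hTcard
  have hlt : Fintype.card (↥T → ZMod 2) < Fintype.card V4 := by
    rw [Fintype.card_fun]
    have : (2 : ℕ) ^ Fintype.card ↥T ≤ 2 ^ 3 :=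
      Nat.pow_le_pow_right (by norm_num) hcardT
    simp only [ZMod.card]
    calc 2 ^ Fintype.card ↥T ≤ 2 ^ 3 := this
      _ < Fintype.card V4 := by simp [Fintype.card_fun]
  obtain ⟨v₁, v₂, hne, heq⟩ :=
    Fintype.exists_ne_map_eq_of_card_lt
      (fun v : V4 => fun t : ↥T => dot4 ((t : V4) + s₀) v) hlt
  set v : V4 := v₁ + v₂ with hv
  have hvne : v ≠ 0 := by
    intro h0
    apply hne
    funext i
    have := congrFun h0 i
    simp only [Pi.add_apply, Pi.zero_apply] at this
    exact zmod2_eq_of_add_eq_zero this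
  have horth : ∀ s ∈ S, dot4 (s + s₀) v = 0 := by
    intro s hsS
    by_cases hss : s = s₀
    · subst hss
      rw [dot4_add_left, zmod2_add_self]
    · have hsT : s ∈ T := ⟨hsS, hss⟩
      have := congrFun heq ⟨s, hsT⟩
      simp only at this
      rw [hv, dot4_add_right, this, zmod2_add_self]
  refine h u hu v hvne ⟨dot4 s₀ v, fun x => ?_⟩
  have hx : deriv4 f u x ∈ S := ⟨x, rfl⟩
  have := horth _ hx
  rw [dot4_add_left] at this
  exact zmod2_eq_of_add_eq_zero this
end

section
/- Let m ≥ 2 and let f : (𝔽₂)^m → (𝔽₂)^m be a weakly APN function. Then for every u ≠ 0 there is at most one nonzero v ∈ (𝔽₂)^m such that the Boolean function x ↦ ⟨f̂_u(x), v⟩ is constant; in other words n̂(f) ≤ 1. -/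
/-- Theorem (converse): if `m ≥ 2` and `f : (𝔽₂)^m → (𝔽₂)^m` is weakly APN
(for every `u ≠ 0` the image of the derivative `f̂_u : x ↦ f(x+u) + f(x)` has more than
`2^{m-2}` elements), then for every `u ≠ 0` there is at most one nonzero `v` such that the
component function `x ↦ ⟨f̂_u(x), v⟩` is constant; i.e. `n̂(f) ≤ 1`. -/
theorem nhat_le_one_of_weaklyAPN {m : ℕ} (hm : 2 ≤ m)
    (f : (Fin m → ZMod 2) → (Fin m → ZMod 2))
    (hAPN : ∀ u : Fin m → ZMod 2, u ≠ 0 →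
      2 ^ (m - 2) < (Set.range (fun x : Fin m → ZMod 2 => f (x + u) + f x)).ncard) :
    ∀ u : Fin m → ZMod 2, u ≠ 0 →
      {v : Fin m → ZMod 2 | v ≠ 0 ∧
        ∃ c : ZMod 2, ∀ x : Fin m → ZMod 2, ∑ i, (f (x + u) + f x) i * v i = c}.Subsingleton := by
  intro u hu v₁ hv₁ v₂ hv₂
  by_contra hne
  obtain ⟨hv₁0, c₁, hc₁⟩ := hv₁
  obtain ⟨hv₂0, c₂, hc₂⟩ := hv₂
  -- The linear map `y ↦ (⟨y,v₁⟩, ⟨y,v₂⟩)`.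
  let L : (Fin m → ZMod 2) →ₗ[ZMod 2] ZMod 2 × ZMod 2 :=
    { toFun := fun y => (∑ i, y i * v₁ i, ∑ i, y i * v₂ i)
      map_add' := by
        intro a b
        simp [add_mul, Finset.sum_add_distrib]
      map_smul' := by
        intro a b
        simp [Finset.mul_sum, mul_assoc, Prod.smul_mk, smul_eq_mul] }
  have hL : ∀ y, L y = (∑ i, y i * v₁ i, ∑ i, y i * v₂ i) := fun _ => rfl
  have hsingle : ∀ j : Fin m, L (Pi.single j 1) = (v₁ j, v₂ j) := by
    intro j
    simp [hL, Pi.single_apply, ite_mul, Finset.sum_ite_eq']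
  have htwo : ∀ a b : ZMod 2, a ≠ b → (a = 1 ∧ b = 0) ∨ (a = 0 ∧ b = 1) := by decide
  have hone : ∀ a : ZMod 2, a ≠ 0 → a = 1 := by decide
  -- `v₁, v₂` are linearly independent, so `L` has a section on generators.
  obtain ⟨p, q, hp, hq⟩ : ∃ p q, L p = (1, 0) ∧ L q = (0, 1) := by
    obtain ⟨j, hj⟩ : ∃ j, v₁ j ≠ v₂ j := by
      by_contra h; push_neg at h; exact hne (funext h)
    rcases htwo _ _ hj with ⟨h1, h2⟩ | ⟨h1, h2⟩
    · obtain ⟨k, hk0⟩ := Function.ne_iff.mp hv₂0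
      have hk : v₂ k = 1 := hone _ hk0
      refine ⟨Pi.single j 1, (Pi.single k 1 + v₁ k • (Pi.single j 1 : Fin m → ZMod 2)), by simp [hsingle, h1, h2], ?_⟩
      rw [map_add, map_smul, hsingle, hsingle, h1, h2, hk]
      have : ∀ a : ZMod 2, (a, (1:ZMod 2)) + a • ((1:ZMod 2), (0:ZMod 2)) = (0, 1) := by decide
      exact this _
    · obtain ⟨k, hk0⟩ := Function.ne_iff.mp hv₁0
      have hk : v₁ k = 1 := hone _ hk0
      refine ⟨(Pi.single k 1 + v₂ k • (Pi.single j 1 : Fin m → ZMod 2)), Pi.single j 1, ?_, by simp [hsingle, h1, h2]⟩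
      rw [map_add, map_smul, hsingle, hsingle, h1, h2, hk]
      have : ∀ a : ZMod 2, ((1:ZMod 2), a) + a • ((0:ZMod 2), (1:ZMod 2)) = (1, 0) := by decide
      exact this _
  have hsurj : Function.Surjective L := by
    rintro ⟨a, b⟩
    refine ⟨a • p + b • q, ?_⟩
    rw [map_add, map_smul, map_smul, hp, hq]
    have : ∀ a b : ZMod 2, a • ((1:ZMod 2), (0:ZMod 2)) + b • ((0:ZMod 2), (1:ZMod 2)) = (a, b) := by
      decide
    exact this a b
  -- Cardinality of the kernel.
  have hcardV : Nat.card (Fin m → ZMod 2) = 2 ^ m := by simp [Nat.card_fun, Nat.card_zmod]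
  have hcardQ : Nat.card ((Fin m → ZMod 2) ⧸ LinearMap.ker L) = 4 := by
    have e := (LinearMap.quotKerEquivRange L).toEquiv
    rw [LinearMap.range_eq_top.mpr hsurj] at e
    rw [Nat.card_congr (e.trans (Submodule.topEquiv).toEquiv)]
    simp [Nat.card_zmod]
  have hker : Nat.card (LinearMap.ker L) = 2 ^ (m - 2) := by
    have h := Submodule.card_eq_card_quotient_mul_card (LinearMap.ker L)
    rw [hcardV, hcardQ] at h
    have hm' : 2 ^ m = 2 ^ (m - 2) * 4 := by
      have : m - 2 + 2 = m := by omega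
      rw [← this, pow_add]; norm_num
    omega
  -- The fiber over `(c₁, c₂)` is a coset of the kernel.
  obtain ⟨y₀, hy₀⟩ := hsurj (c₁, c₂)
  have hfiber : {y : Fin m → ZMod 2 | L y = (c₁, c₂)} =
      (fun k => k + y₀) '' (LinearMap.ker L : Set (Fin m → ZMod 2)) := by
    ext z
    constructor
    · intro hz
      refine ⟨z - y₀, ?_, by simp⟩
      simp only [SetLike.mem_coe, LinearMap.mem_ker, map_sub, hy₀]
      rw [show L z = (c₁, c₂) from hz, sub_self]
    · rintro ⟨k, hk, rfl⟩
      simp only [SetLike.mem_coe, LinearMap.mem_ker] at hk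
      simp [Set.mem_setOf_eq, map_add, hk, hy₀]
  have hfcard : {y : Fin m → ZMod 2 | L y = (c₁, c₂)}.ncard = 2 ^ (m - 2) := by
    rw [hfiber, Set.ncard_image_of_injective _ (add_left_injective y₀)]
    rw [← hker]
    exact Nat.card_coe_set_eq _ ▸ rfl
  -- The range of the derivative is contained in the fiber.
  have hsub : Set.range (fun x : Fin m → ZMod 2 => f (x + u) + f x) ⊆
      {y : Fin m → ZMod 2 | L y = (c₁, c₂)} := by
    rintro _ ⟨x, rfl⟩
    simp only [Set.mem_setOf_eq, hL]
    exact Prod.ext (hc₁ x) (hc₂ x)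
  have := (hAPN u hu).trans_le (Set.ncard_le_ncard hsub (Set.toFinite _))
  rw [hfcard] at this
  exact lt_irrefl _ this
end

section
/- Identify each integer k ∈ {0,…,15} with the vector of its binary digits in (𝔽₂)⁴. The permutation f of (𝔽₂)⁴ given by the value table (0,1,2,13,4,15,14,7,8,3,5,9,10,6,12,11) (i.e. f(0)=0, f(1)=1, f(2)=2, f(3)=13, …, f(15)=11) is weakly APN but is not 4-differentially uniform. -/

lemma ncard_setOf (p : V4 → Prop) [DecidablePred p] :
    {x : V4 | p x}.ncard = (Finset.univ.filter p).card := by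
  rw [← Set.ncard_coe_finset]; congr 1; ext x; simp

lemma ncard_range (g : V4 → V4) :
    (Set.range g).ncard = (Finset.univ.image g).card := by
  rw [← Set.ncard_coe_finset]; congr 1; ext x; simp

/-- Fact: the permutation of `(𝔽₂)⁴` with value table
`(0,1,2,13,4,15,14,7,8,3,5,9,10,6,12,11)` is weakly APN but not 4-differentially uniform. -/
theorem table1_weaklyAPN_not_diffUnif :
    Function.Bijective (tableFun [0,1,2,13,4,15,14,7,8,3,5,9,10,6,12,11]) ∧
    WeaklyAPN4 (tableFun [0,1,2,13,4,15,14,7,8,3,5,9,10,6,12,11]) ∧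
    ¬ DiffUnif4 (tableFun [0,1,2,13,4,15,14,7,8,3,5,9,10,6,12,11]) := by
  refine ⟨by decide, ?_, ?_⟩
  · intro u hu
    rw [ncard_range]
    revert hu
    revert u
    decide
  · intro h
    have := h (toVec 3) (by decide) (toVec 1)
    rw [ncard_setOf] at this
    revert this
    decide
end

section
/- Identify each integer k ∈ {0,…,15} with the vector of its binary digits in (𝔽₂)⁴. The permutation f of (𝔽₂)⁴ given by the value table (0,1,2,7,4,10,15,9,8,3,13,14,12,5,6,11) satisfies: for every nonzero u ∈ (𝔽₂)⁴ there is at most one nonzero v ∈ (𝔽₂)⁴ with x ↦ ⟨f̂_u(x), v⟩ constant (i.e. n̂(f) ≤ 1), yet f is not weakly APN. Hence the converse of 'weakly APN implies n̂(f) ≤ 1' fails. -/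
def Pu (u v : V4) : Prop := v ≠ 0 ∧ ∃ c : ZMod 2, ∀ x : V4,
  dot4 (deriv4 (tableFun [0,1,2,7,4,10,15,9,8,3,13,14,12,5,6,11]) u x) v = c

instance (u v : V4) : Decidable (Pu u v) := by unfold Pu; infer_instance

/-- Fact: the permutation of `(𝔽₂)⁴` with value table
`(0,1,2,7,4,10,15,9,8,3,13,14,12,5,6,11)` satisfies `n̂(f) ≤ 1` (for every nonzero `u`
at most one nonzero `v` makes `x ↦ ⟨f̂_u(x), v⟩` constant), yet it is not weakly APN:
the converse of "weakly APN implies `n̂(f) ≤ 1`" fails. -/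
theorem table2_nhat_le_one_not_weaklyAPN :
    Function.Bijective (tableFun [0,1,2,7,4,10,15,9,8,3,13,14,12,5,6,11]) ∧
    (∀ u : V4, u ≠ 0 →
      {v : V4 | v ≠ 0 ∧ ∃ c : ZMod 2, ∀ x : V4,
        dot4 (deriv4 (tableFun [0,1,2,7,4,10,15,9,8,3,13,14,12,5,6,11]) u x) v = c}.Subsingleton) ∧
    ¬ WeaklyAPN4 (tableFun [0,1,2,7,4,10,15,9,8,3,13,14,12,5,6,11]) := by
  refine ⟨?_, ?_, ?_⟩
  · rw [Fintype.bijective_iff_injective_and_card]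
    exact ⟨by decide, rfl⟩
  · intro u hu
    intro v hv w hw
    simp only [Set.mem_setOf_eq] at hv hw
    have key : ∀ u v w : V4, u ≠ 0 → Pu u v → Pu u w → v = w := by decide
    exact key u v w hu hv hw
  · intro h
    have h8 := h (toVec 8) (by decide)
    have : Set.range (deriv4 (tableFun [0,1,2,7,4,10,15,9,8,3,13,14,12,5,6,11]) (toVec 8))
        = ↑(Finset.image (deriv4 (tableFun [0,1,2,7,4,10,15,9,8,3,13,14,12,5,6,11]) (toVec 8)) Finset.univ) := by
      rw [Finset.coe_image, Finset.coe_univ, Set.image_univ]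
    rw [this, Set.ncard_coe_finset] at h8
    revert h8; decide
end
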